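/- Let g : F(u,v) → Z ⋊ Z be the homomorphism with g(u) = (1,0) and g(v) = (0,1). Then the kernel of g is a free group with basis the set {Γ_{k,l} = v^k u^l v u^l v^{-k-1} : k, l ∈ Z, l ≠ 0}. -/

import Mathlib

/-- The underlying set of the nontrivial semidirect product `ℤ ⋊ ℤ`
(the fundamental group of the Klein bottle). -/
@[ext]
structure KB where
  a : ℤ
  b : ℤ

namespace KB

instance : Mul KB := ⟨fun x y => ⟨x.a + ((-1 : ℤˣ) ^ x.b : ℤˣ) * y.a, x.b + y.b⟩⟩
instance : One KB := ⟨⟨0, 0⟩⟩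
instance : Inv KB := ⟨fun x => ⟨-(((-1 : ℤˣ) ^ x.b : ℤˣ) * x.a), -x.b⟩⟩

lemma mul_def (x y : KB) :
    x * y = ⟨x.a + ((-1 : ℤˣ) ^ x.b : ℤˣ) * y.a, x.b + y.b⟩ := rfl

lemma one_def : (1 : KB) = ⟨0, 0⟩ := rfl

lemma inv_def (x : KB) :
    x⁻¹ = ⟨-(((-1 : ℤˣ) ^ x.b : ℤˣ) * x.a), -x.b⟩ := rfl

instance : Group KB :=
  Group.ofLeftAxioms
    (by
      rintro ⟨a, b⟩ ⟨c, d⟩ ⟨e, f⟩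
      ext <;> simp [mul_def, zpow_add] <;> ring)
    (by rintro ⟨a, b⟩; ext <;> simp [mul_def, one_def])
    (by
      rintro ⟨a, b⟩
      ext <;> simp [mul_def, one_def, inv_def, zpow_neg])

end KB
namespace KleinBU

/-- Generator `u` of the free group `F(u,v)`. -/
def u : FreeGroup Bool := FreeGroup.of true

/-- Generator `v` of the free group `F(u,v)`. -/
def v : FreeGroup Bool := FreeGroup.of false

/-- The homomorphism `g : F(u,v) → ℤ ⋊ ℤ` with `g u = (1,0)` and `g v = (0,1)`. -/
def g : FreeGroup Bool →* KB :=
  FreeGroup.lift (fun x => if x then ⟨1, 0⟩ else ⟨0, 1⟩)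

/-- The element `B = u v u v⁻¹`. -/
def Bel : FreeGroup Bool := u * v * u * v⁻¹

/-- The element `B_{k,l} = v^k u^l B u^{-l} v^{-k}`. -/
def Bkl (k l : ℤ) : FreeGroup Bool := v ^ k * u ^ l * Bel * u ^ (-l) * v ^ (-k)

end KleinBU

namespace KerGProof
open KleinBU

abbrev Idx := {p : ℤ × ℤ // p.2 ≠ 0}
abbrev FG := FreeGroup Idx

/-- sign (-1)^b as an integer -/
def sg (b : ℤ) : ℤ := (((-1 : ℤˣ) ^ b : ℤˣ) : ℤ)

lemma sg_add (b c : ℤ) : sg (b + c) = sg b * sg c := by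
  simp [sg, zpow_add]

lemma sg_mul_self (b : ℤ) : sg b * sg b = 1 := by
  have := Int.units_mul_self ((-1 : ℤˣ) ^ b)
  simpa [sg, ← Units.val_mul] using congrArg Units.val this

lemma sg_zero : sg 0 = 1 := by simp [sg]
lemma sg_one : sg 1 = -1 := by simp [sg]

lemma KB.mk_mul (a b c d : ℤ) : (⟨a, b⟩ : KB) * ⟨c, d⟩ = ⟨a + sg b * c, b + d⟩ := rfl

lemma KB.mk_inv (a b : ℤ) : (⟨a, b⟩ : KB)⁻¹ = ⟨-(sg b * a), -b⟩ := rfl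

/-- the action of KB on functions KB → FG by right translation of the argument -/
def act : KB →* MulAut (KB → FG) where
  toFun k :=
    { toFun := fun f h => f (h * k)
      invFun := fun f h => f (h * k⁻¹)
      left_inv := by intro f; funext h; simp [mul_assoc]
      right_inv := by intro f; funext h; simp [mul_assoc]
      map_mul' := by intro f₁ f₂; rfl }
  map_one' := by ext f h; simp
  map_mul' := by intro k₁ k₂; ext f h; simp [mul_assoc]

lemma act_apply (k : KB) (f : KB → FG) (h : KB) : act k f h = f (h * k) := rfl

abbrev W := SemidirectProduct (KB → FG) KB act

/-- contribution of letter v read at coset h -/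
def fv (h : KB) : FG :=
  if hc : sg h.b * h.a ≠ 0 then FreeGroup.of ⟨(h.b, sg h.b * h.a), hc⟩ else 1

/-- the rewriting homomorphism -/
def Φ : FreeGroup Bool →* W :=
  FreeGroup.lift (fun x => if x then ⟨1, ⟨1, 0⟩⟩ else ⟨fv, ⟨0, 1⟩⟩)

lemma Φ_u : Φ u = ⟨1, ⟨1, 0⟩⟩ := by simp [Φ, u]
lemma Φ_v : Φ v = ⟨fv, ⟨0, 1⟩⟩ := by simp [Φ, v]

lemma g_u : g u = ⟨1, 0⟩ := by simp [g, u]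
lemma g_v : g v = ⟨0, 1⟩ := by simp [g, v]

lemma Φ_right (w : FreeGroup Bool) : (Φ w).right = g w := by
  have : (SemidirectProduct.rightHom.comp Φ) = g := by
    apply FreeGroup.ext_hom
    intro a
    cases a <;>
      simp [Φ, g, SemidirectProduct.rightHom]
  exact DFunLike.congr_fun this w

lemma Φ_mul_left (w₁ w₂ : FreeGroup Bool) (h : KB) :
    (Φ (w₁ * w₂)).left h = (Φ w₁).left h * (Φ w₂).left (h * g w₁) := by
  rw [map_mul, SemidirectProduct.mul_left, Pi.mul_apply, act_apply, Φ_right]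

lemma Φ_inv_left (w : FreeGroup Bool) (h : KB) :
    (Φ w⁻¹).left h = ((Φ w).left (h * (g w)⁻¹))⁻¹ := by
  rw [map_inv, SemidirectProduct.inv_left, act_apply, Pi.inv_apply, Φ_right]

/-- the transversal -/
def t (h : KB) : FreeGroup Bool := v ^ h.b * u ^ (sg h.b * h.a)

/-- the expansion homomorphism -/
def φm : FG →* FreeGroup Bool :=
  FreeGroup.lift (fun p => v ^ p.1.1 * u ^ p.1.2 * v * u ^ p.1.2 * v ^ (-p.1.1 - 1))

lemma key (w : FreeGroup Bool) (h : KB) :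
    φm ((Φ w).left h) = t h * w * (t (h * g w))⁻¹ := by
  induction w using FreeGroup.induction_on generalizing h with
  | C1 => simp
  | of x =>
    cases x
    · -- v
      show φm ((Φ v).left h) = t h * v * (t (h * g v))⁻¹
      obtain ⟨a, b⟩ := h
      rw [Φ_v, g_v, KB.mk_mul]
      simp only [t, fv]
      by_cases hc : sg b * a ≠ 0
      · rw [dif_pos hc]
        have e1 : sg (b + 1) * (a + sg b * 0) = -(sg b * a) := by
          rw [sg_add, sg_one]; ring
        simp only [t, φm, FreeGroup.lift_apply_of, e1]
        group
      · rw [dif_neg hc]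
        push_neg at hc
        have e1 : sg (b + 1) * (a + sg b * 0) = 0 := by
          rw [sg_add, sg_one]; linear_combination -hc
        simp only [t, hc, e1, map_one, zpow_zero, mul_one]
        group
    · -- u
      show φm ((Φ u).left h) = t h * u * (t (h * g u))⁻¹
      obtain ⟨a, b⟩ := h
      rw [Φ_u, g_u, KB.mk_mul]
      show φm 1 = _
      have e1 : sg (b + 0) * (a + sg b * 1) = sg b * a + 1 := by
        rw [add_zero, mul_add, mul_one, sg_mul_self]
      simp only [t, e1, add_zero, map_one]
      have e2 : (1 : ℤ) - sg b ^ 2 = 0 := by rw [sq, sg_mul_self]; ring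
      group
      rw [e2]
      group
  | inv_of x ih =>
    rw [Φ_inv_left, map_inv, ih, map_inv]
    group
  | mul w₁ w₂ ih₁ ih₂ =>
    rw [Φ_mul_left, map_mul, ih₁, ih₂, map_mul]
    group

lemma t_one : t 1 = 1 := by
  simp [t, KB.one_def, sg_zero]

lemma key_ker {w : FreeGroup Bool} (hw : w ∈ MonoidHom.ker g) :
    φm ((Φ w).left 1) = w := by
  have := key w 1
  rw [MonoidHom.mem_ker] at hw
  rw [hw, mul_one, t_one] at this
  simpa using this

lemma KB.mul_a (x y : KB) : (x * y).a = x.a + sg x.b * y.a := rfl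
lemma KB.mul_b (x y : KB) : (x * y).b = x.b + y.b := rfl
lemma KB.inv_a (x : KB) : (x⁻¹).a = -(sg x.b * x.a) := rfl

lemma g_upow (l : ℤ) : g (u ^ l) = ⟨l, 0⟩ := by
  rw [map_zpow, g_u]
  induction l using Int.induction_on with
  | zero => rfl
  | succ n ih =>
    rw [zpow_add, zpow_one, ih, KB.mk_mul]
    ext <;> simp [sg_zero]
  | pred n ih =>
    rw [zpow_sub, zpow_one, ih]
    rw [show ((⟨1, 0⟩ : KB)⁻¹) = ⟨-1, 0⟩ by rw [KB.mk_inv]; ext <;> simp [sg_zero]]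
    rw [KB.mk_mul]
    ext <;> simp [sg_zero] <;> ring

lemma g_vpow (k : ℤ) : g (v ^ k) = ⟨0, k⟩ := by
  rw [map_zpow, g_v]
  induction k using Int.induction_on with
  | zero => rfl
  | succ n ih =>
    rw [zpow_add, zpow_one, ih, KB.mk_mul]
    ext <;> simp
  | pred n ih =>
    rw [zpow_sub, zpow_one, ih]
    rw [show ((⟨0, 1⟩ : KB)⁻¹) = ⟨0, -1⟩ by rw [KB.mk_inv]; ext <;> simp]
    rw [KB.mk_mul]
    ext <;> simp <;> ring

def Ksub : Subgroup (FreeGroup Bool) where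
  carrier := {w | ∀ h, (Φ w).left h = 1}
  one_mem' := by intro h; simp
  mul_mem' := by
    intro w₁ w₂ h1 h2 h
    rw [Φ_mul_left, h1, h2, one_mul]
  inv_mem' := by
    intro w hw h
    rw [Φ_inv_left, hw, inv_one]

lemma Φ_upow_left (l : ℤ) (h : KB) : (Φ (u ^ l)).left h = 1 := by
  have hu : u ∈ Ksub := by intro h'; rw [Φ_u]; rfl
  exact zpow_mem hu l h

def Hsub : Subgroup (FreeGroup Bool) where
  carrier := {w | (g w).a = 0 ∧ ∀ b : ℤ, (Φ w).left ⟨0, b⟩ = 1}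
  one_mem' := by
    constructor
    · simp [KB.one_def]
    · intro b; simp
  mul_mem' := by
    rintro w₁ w₂ ⟨ha1, h1⟩ ⟨ha2, h2⟩
    constructor
    · rw [map_mul, KB.mul_a, ha1, ha2, mul_zero, add_zero]
    · intro b
      have hcoset : (⟨0, b⟩ : KB) * g w₁ = ⟨0, b + (g w₁).b⟩ := by
        ext
        · rw [KB.mul_a, ha1]; simp
        · rfl
      rw [Φ_mul_left, h1 b, one_mul, hcoset, h2]
  inv_mem' := by
    rintro w ⟨ha, hl⟩
    constructor
    · rw [map_inv, KB.inv_a, ha, mul_zero, neg_zero]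
    · intro b
      have hcoset : (⟨0, b⟩ : KB) * (g w)⁻¹ = ⟨0, b + -(g w).b⟩ := by
        ext
        · rw [KB.mul_a, KB.inv_a, ha]; simp
        · rfl
      rw [Φ_inv_left, hcoset, hl, inv_one]

lemma Φ_vpow_left (k b : ℤ) : (Φ (v ^ k)).left ⟨0, b⟩ = 1 := by
  have hv : v ∈ Hsub := by
    constructor
    · rw [g_v]
    · intro b'
      rw [Φ_v]
      show fv ⟨0, b'⟩ = 1
      simp [fv]
  exact (zpow_mem hv k).2 b

def ρ : MonoidHom.ker g →* FG where
  toFun w := (Φ (w : FreeGroup Bool)).left 1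
  map_one' := by simp
  map_mul' := by
    rintro ⟨w₁, h₁⟩ ⟨w₂, h₂⟩
    show (Φ (w₁ * w₂)).left 1 = _
    rw [Φ_mul_left, MonoidHom.mem_ker.mp h₁, mul_one]

lemma g_gamma (p : Idx) :
    g (v ^ p.1.1 * u ^ p.1.2 * v * u ^ p.1.2 * v ^ (-p.1.1 - 1)) = 1 := by
  obtain ⟨⟨k, l⟩, hl⟩ := p
  simp only [map_mul, g_upow, g_vpow, g_v]
  ext
  · simp [KB.mul_a, KB.mul_b, KB.one_def, sg_add, sg_one, sg_zero]
    try ring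
  · simp [KB.mul_b, KB.one_def]
    try ring

lemma φm_mem (x : FG) : φm x ∈ MonoidHom.ker g := by
  rw [MonoidHom.mem_ker]
  have : g.comp φm = 1 := by
    apply FreeGroup.ext_hom
    intro p
    simp only [MonoidHom.comp_apply, φm, FreeGroup.lift_apply_of, MonoidHom.one_apply]
    exact g_gamma p
  exact DFunLike.congr_fun this x

def φ' : FG →* MonoidHom.ker g := φm.codRestrict _ φm_mem

lemma comp1 (w : MonoidHom.ker g) : φ' (ρ w) = w := by
  apply Subtype.ext
  show φm ((Φ (w : FreeGroup Bool)).left 1) = (w : FreeGroup Bool)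
  exact key_ker w.2

lemma rho_phi (p : Idx) : ρ (φ' (FreeGroup.of p)) = FreeGroup.of p := by
  obtain ⟨⟨k, l⟩, hl⟩ := p
  show (Φ (φm (FreeGroup.of ⟨(k, l), hl⟩))).left 1 = _
  have e : φm (FreeGroup.of (⟨(k, l), hl⟩ : Idx))
      = v ^ k * u ^ l * v * u ^ l * v ^ (-k - 1) := by
    simp [φm]
  rw [e]
  have h2 : (1 : KB) * g (v ^ k) = ⟨0, k⟩ := by rw [g_vpow, one_mul]
  have h3 : (1 : KB) * g (v ^ k * u ^ l) = ⟨sg k * l, k⟩ := by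
    rw [map_mul, g_vpow, g_upow, one_mul, KB.mk_mul]
    ext <;> simp
  have h4 : (1 : KB) * g (v ^ k * u ^ l * v) = ⟨sg k * l, k + 1⟩ := by
    rw [map_mul, map_mul, g_vpow, g_upow, g_v, one_mul, KB.mk_mul, KB.mk_mul]
    ext <;> simp
  have h5 : (1 : KB) * g (v ^ k * u ^ l * v * u ^ l) = ⟨0, k + 1⟩ := by
    rw [map_mul, map_mul, map_mul, g_vpow, g_upow, g_v, one_mul,
      KB.mk_mul, KB.mk_mul, KB.mk_mul]
    ext
    · simp [sg_add, sg_one]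
      try ring
    · simp
  rw [Φ_mul_left, Φ_mul_left, Φ_mul_left, Φ_mul_left, h2, h3, h4, h5]
  rw [show (1 : KB) = ⟨0, 0⟩ from rfl, Φ_vpow_left, Φ_upow_left, Φ_upow_left,
    Φ_vpow_left, Φ_v]
  simp only [one_mul, mul_one]
  show fv ⟨sg k * l, k⟩ = _
  have hs : sg k * (sg k * l) = l := by rw [← mul_assoc, sg_mul_self, one_mul]
  simp only [fv, hs]
  rw [dif_pos hl]

theorem ker_g_free_basis_Gamma :
    ∃ b : FreeGroupBasis {p : ℤ × ℤ // p.2 ≠ 0} (MonoidHom.ker g),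
      ∀ p : {p : ℤ × ℤ // p.2 ≠ 0},
        (b p : FreeGroup Bool)
          = v ^ p.1.1 * u ^ p.1.2 * v * u ^ p.1.2 * v ^ (-p.1.1 - 1) := by
  have comp2 : ρ.comp φ' = MonoidHom.id FG := by
    apply FreeGroup.ext_hom
    intro p
    simpa using rho_phi p
  let e : MonoidHom.ker g ≃* FG :=
    { toFun := ρ
      invFun := φ'
      left_inv := comp1
      right_inv := fun x => DFunLike.congr_fun comp2 x
      map_mul' := ρ.map_mul }
  refine ⟨FreeGroupBasis.ofRepr e, fun p => ?_⟩
  have hb : (FreeGroupBasis.ofRepr e) p = e.symm (FreeGroup.of p) := rfl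
  have hsymm : e.symm (FreeGroup.of p) = φ' (FreeGroup.of p) := by
    rw [MulEquiv.symm_apply_eq]
    exact (rho_phi p).symm
  rw [hb, hsymm]
  show φm (FreeGroup.of p) = _
  simp [φm]

end KerGProof

open KleinBU in
/-- The kernel of `g : F(u,v) → ℤ ⋊ ℤ` is a free group with basis
`{Γ_{k,l} = v^k u^l v u^l v^{-k-1} : k, l ∈ ℤ, l ≠ 0}`. -/
theorem ker_g_free_basis_Gamma :
    ∃ b : FreeGroupBasis {p : ℤ × ℤ // p.2 ≠ 0} (MonoidHom.ker g),
      ∀ p : {p : ℤ × ℤ // p.2 ≠ 0},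
        (b p : FreeGroup Bool)
          = v ^ p.1.1 * u ^ p.1.2 * v * u ^ p.1.2 * v ^ (-p.1.1 - 1) := by
  exact KerGProof.ker_g_free_basis_Gamma
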